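/- Let Ω be a nonempty closed convex subset of ℝˢ and let x̄ ∉ Ω. Then the subdifferential of the distance function d(·;Ω) at x̄ is the singleton {(x̄ − Π(x̄;Ω))/d(x̄;Ω)}; that is, a vector v satisfies ⟨v, x − x̄⟩ ≤ d(x;Ω) − d(x̄;Ω) for all x ∈ ℝˢ if and only if v = (x̄ − Π(x̄;Ω))/d(x̄;Ω). -/

import Mathlib

/-- Proposition 2.2, case `xbar ∉ Ω`: the subdifferential of the distance function
`d(·; Ω)` at `xbar` is the singleton `{(xbar - Π(xbar; Ω)) / d(xbar; Ω)}`. -/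
theorem subdiff_infDist_of_not_mem {s : ℕ}
    (Ω : Set (EuclideanSpace ℝ (Fin s)))
    (hne : Ω.Nonempty) (hcl : IsClosed Ω) (hcv : Convex ℝ Ω)
    (xbar : EuclideanSpace ℝ (Fin s)) (hxbar : xbar ∉ Ω)
    (p : EuclideanSpace ℝ (Fin s))
    (hp : p ∈ Ω ∧ dist xbar p = Metric.infDist xbar Ω) :
    ∀ v : EuclideanSpace ℝ (Fin s),
      (∀ x, (inner ℝ v (x - xbar) : ℝ) ≤ Metric.infDist x Ω - Metric.infDist xbar Ω) ↔
        v = (Metric.infDist xbar Ω)⁻¹ • (xbar - p) := by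
  obtain ⟨hpΩ, hpd⟩ := hp
  set d := Metric.infDist xbar Ω with hd
  have hd0 : 0 < d := (hcl.notMem_iff_infDist_pos hne).1 hxbar
  have hnorm : ‖xbar - p‖ = d := by rw [← hpd, dist_eq_norm]
  -- projection inequality
  have hproj : ∀ y ∈ Ω, (inner ℝ (xbar - p) (y - p) : ℝ) ≤ 0 := by
    have h1 : ‖xbar - p‖ = ⨅ w : Ω, ‖xbar - w‖ := by
      rw [hnorm, hd, Metric.infDist_eq_iInf]
      exact iInf_congr fun w => dist_eq_norm _ _
    exact (norm_eq_iInf_iff_real_inner_le_zero hcv hpΩ).1 h1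
  intro v
  constructor
  · intro hv
    -- ‖v‖ ≤ 1
    have hv1 : ‖v‖ ≤ 1 := by
      by_contra h
      push_neg at h
      have := hv (xbar + v)
      have h2 : Metric.infDist (xbar + v) Ω - d ≤ ‖v‖ := by
        have := Metric.infDist_le_infDist_add_dist (x := xbar + v) (y := xbar) (s := Ω)
        have hdist : dist (xbar + v) xbar = ‖v‖ := by
          rw [dist_eq_norm]; congr 1; abel
        linarith [this, hdist ▸ this]
      rw [add_sub_cancel_left, real_inner_self_eq_norm_sq] at this
      nlinarith [norm_nonneg v]
    -- inner v (xbar - p) ≥ d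
    have h2 : d ≤ (inner ℝ v (xbar - p) : ℝ) := by
      have := hv p
      rw [Metric.infDist_zero_of_mem hpΩ] at this
      have : (inner ℝ v (p - xbar) : ℝ) ≤ -d := by linarith
      have h3 : (inner ℝ v (xbar - p) : ℝ) = -(inner ℝ v (p - xbar) : ℝ) := by
        rw [← inner_neg_right]; congr 1; abel
      linarith
    -- conclude d • v = xbar - p
    have hkey : ‖d • v - (xbar - p)‖ ^ 2 ≤ 0 := by
      rw [← real_inner_self_eq_norm_sq]
      have : (inner ℝ (d • v - (xbar - p)) (d • v - (xbar - p)) : ℝ)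
          = d ^ 2 * ‖v‖ ^ 2 - 2 * d * (inner ℝ v (xbar - p) : ℝ) + ‖xbar - p‖ ^ 2 := by
        rw [inner_sub_sub_self]
        simp only [real_inner_smul_left, real_inner_smul_right,
          real_inner_self_eq_norm_sq, norm_smul, Real.norm_eq_abs, mul_pow, sq_abs]
        rw [real_inner_comm (xbar - p) v]
        ring
      rw [this, hnorm]
      have hv1sq : ‖v‖ ^ 2 ≤ 1 := by nlinarith [norm_nonneg v]
      nlinarith [mul_le_mul_of_nonneg_left hv1sq (sq_nonneg d),
        mul_le_mul_of_nonneg_left h2 hd0.le]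
    have heq : d • v = xbar - p := by
      have := pow_eq_zero_iff (n := 2) (by norm_num) |>.1
        (le_antisymm hkey (by positivity))
      rwa [norm_eq_zero, sub_eq_zero] at this
    rw [← heq, smul_smul, inv_mul_cancel₀ hd0.ne', one_smul]
  · rintro rfl x
    rw [real_inner_smul_left]
    have hub : ∀ z, (inner ℝ (xbar - p) (z - p) : ℝ) ≤ d * Metric.infDist z Ω := by
      intro z
      rw [← inv_mul_le_iff₀ hd0, Metric.infDist_eq_iInf]
      haveI := hne.to_subtype
      refine le_ciInf fun ⟨y, hy⟩ => ?_
      rw [inv_mul_le_iff₀ hd0]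
      have hcs : (inner ℝ (xbar - p) (z - y) : ℝ) ≤ d * dist z y := by
        calc (inner ℝ (xbar - p) (z - y) : ℝ) ≤ ‖xbar - p‖ * ‖z - y‖ :=
              real_inner_le_norm _ _
          _ = d * dist z y := by rw [hnorm, dist_eq_norm]
      have hsplit : (inner ℝ (xbar - p) (z - p) : ℝ)
          = (inner ℝ (xbar - p) (z - y) : ℝ) + (inner ℝ (xbar - p) (y - p) : ℝ) := by
        rw [← inner_add_right]; congr 1; abel
      have := hproj y hy
      simp only [] 
      linarith
    have hxb : (inner ℝ (xbar - p) (xbar - p) : ℝ) = d * d := by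
      rw [real_inner_self_eq_norm_sq, hnorm]; ring
    have hsplit : (inner ℝ (xbar - p) (x - xbar) : ℝ)
        = (inner ℝ (xbar - p) (x - p) : ℝ) - (inner ℝ (xbar - p) (xbar - p) : ℝ) := by
      rw [← inner_sub_right]; congr 1; abel
    have h1 := hub x
    rw [inv_mul_le_iff₀ hd0] -- d⁻¹ * inner ≤ rhs ↔ inner ≤ d * rhs ?
    calc (inner ℝ (xbar - p) (x - xbar) : ℝ)
        = (inner ℝ (xbar - p) (x - p) : ℝ) - d * d := by rw [hsplit, hxb]
      _ ≤ d * Metric.infDist x Ω - d * d := by linarith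
      _ = d * (Metric.infDist x Ω - d) := by ring
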